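/- Let $D$ be an $n\times n$ real matrix with $D_{ij}\ge 0$ for all $i\ne j$. Then $D$ is irreducible if and only if for every $t>0$ all entries of the matrix exponential $\exp(tD)$ are strictly positive. -/

import Mathlib

open NormedSpace

section Aux

variable {n : ℕ}

/-- entries of powers of an entrywise-nonnegative matrix are nonnegative -/
lemma aux_pow_nonneg (A : Matrix (Fin n) (Fin n) ℝ) (hA : ∀ i j, 0 ≤ A i j) :
    ∀ (k : ℕ) (i j : Fin n), 0 ≤ (A ^ k) i j := by
  intro k
  induction k with
  | zero =>
    intro i j
    rw [pow_zero]
    by_cases h : i = j <;> simp [Matrix.one_apply, h]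
  | succ k ih =>
    intro i j
    rw [pow_succ, Matrix.mul_apply]
    exact Finset.sum_nonneg fun m _ => mul_nonneg (ih i m) (hA m j)

/-- entries of powers are bounded by `C ^ k` where `C = (∑∑ entries) + 1` -/
lemma aux_pow_le (A : Matrix (Fin n) (Fin n) ℝ) (hA : ∀ i j, 0 ≤ A i j) :
    ∀ (k : ℕ) (i j : Fin n), (A ^ k) i j ≤ ((∑ a, ∑ b, A a b) + 1) ^ k := by
  set C : ℝ := (∑ a, ∑ b, A a b) + 1 with hC
  have hC0 : 0 ≤ ∑ a, ∑ b, A a b :=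
    Finset.sum_nonneg fun a _ => Finset.sum_nonneg fun b _ => hA a b
  have hC1 : (1 : ℝ) ≤ C := by simp [hC]; linarith
  intro k
  induction k with
  | zero =>
    intro i j
    rw [pow_zero, pow_zero]
    simp only [Matrix.one_apply]
    split <;> norm_num
  | succ k ih =>
    intro i j
    rw [pow_succ', Matrix.mul_apply, pow_succ']
    calc ∑ m, A i m * (A ^ k) m j ≤ ∑ m, A i m * C ^ k := by
          refine Finset.sum_le_sum fun m _ => ?_
          exact mul_le_mul_of_nonneg_left (ih m j) (hA i m)
      _ = (∑ m, A i m) * C ^ k := by rw [Finset.sum_mul]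
      _ ≤ C * C ^ k := by
          refine mul_le_mul_of_nonneg_right ?_ (pow_nonneg (by linarith) k)
          have : ∑ m, A i m ≤ ∑ a, ∑ b, A a b :=
            Finset.single_le_sum (f := fun a => ∑ b, A a b)
              (fun a _ => Finset.sum_nonneg fun b _ => hA a b) (Finset.mem_univ i)
          linarith

lemma aux_summable (A : Matrix (Fin n) (Fin n) ℝ) (hA : ∀ i j, 0 ≤ A i j) (i j : Fin n) :
    Summable (fun k : ℕ => ((k.factorial : ℝ))⁻¹ * (A ^ k) i j) := by
  set C : ℝ := (∑ a, ∑ b, A a b) + 1 with hC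
  refine Summable.of_nonneg_of_le
    (fun k => mul_nonneg (by positivity) (aux_pow_nonneg A hA k i j))
    (fun k => ?_) (Real.summable_pow_div_factorial C)
  rw [div_eq_inv_mul]
  exact mul_le_mul_of_nonneg_left (aux_pow_le A hA k i j) (by positivity)

/-- entrywise formula for the matrix exponential of a nonnegative matrix -/
lemma aux_exp_apply (A : Matrix (Fin n) (Fin n) ℝ) (hA : ∀ i j, 0 ≤ A i j) (i j : Fin n) :
    exp A i j = ∑' k : ℕ, ((k.factorial : ℝ))⁻¹ * (A ^ k) i j := by
  have hsum : Summable (fun k : ℕ => ((k.factorial : ℝ))⁻¹ • A ^ k) := by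
    refine Pi.summable.mpr ?_
    intro a
    refine Pi.summable.mpr ?_
    intro b
    simpa [Matrix.smul_apply, smul_eq_mul] using aux_summable A hA a b
  have h1 : exp A = ∑' k : ℕ, ((k.factorial : ℝ))⁻¹ • A ^ k := by
    rw [exp_eq_tsum ℝ]
  have e1 : (∑' k : ℕ, ((k.factorial : ℝ))⁻¹ • A ^ k) i =
      ∑' k : ℕ, ((((k.factorial : ℝ))⁻¹ • A ^ k) i : Fin n → ℝ) := tsum_apply hsum
  rw [h1, e1, tsum_apply]
  · rfl
  · exact Pi.summable.mp hsum i

/-- a chain of positive entries gives a positive entry of the power -/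
lemma aux_pow_pos (A : Matrix (Fin n) (Fin n) ℝ) (hA : ∀ i j, 0 ≤ A i j) :
    ∀ (k : ℕ) (l : ℕ → Fin n), (∀ m, m < k → 0 < A (l m) (l (m + 1))) →
      0 < (A ^ k) (l 0) (l k) := by
  intro k
  induction k with
  | zero => intro l _; simp [Matrix.one_apply_eq]
  | succ k ih =>
    intro l hl
    rw [pow_succ', Matrix.mul_apply]
    have h1 : 0 < (A ^ k) (l 1) (l (k + 1)) := by
      have := ih (fun s => l (s + 1)) (fun m hm => hl (m + 1) (by omega))
      simpa using this
    refine Finset.sum_pos' (fun m _ => mul_nonneg (hA _ _) (aux_pow_nonneg A hA k m _)) ?_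
    exact ⟨l 1, Finset.mem_univ _, mul_pos (hl 0 (by omega)) h1⟩

/-- a positive entry of a power gives a chain (with loops removed) -/
lemma aux_chain_of_pow (A D : Matrix (Fin n) (Fin n) ℝ) (hA : ∀ i j, 0 ≤ A i j)
    (hAD : ∀ i j : Fin n, i ≠ j → 0 < A i j → 0 < D i j) :
    ∀ (k : ℕ) (i j : Fin n), i ≠ j → 0 < (A ^ k) i j →
      ∃ k' : ℕ, 1 ≤ k' ∧ ∃ l : ℕ → Fin n, l 0 = i ∧ l k' = j ∧
        ∀ m : ℕ, m < k' → l m ≠ l (m + 1) ∧ 0 < D (l m) (l (m + 1)) := by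
  intro k
  induction k with
  | zero =>
    intro i j hij hpos
    rw [pow_zero, Matrix.one_apply_ne hij] at hpos
    exact absurd hpos (lt_irrefl 0)
  | succ k ih =>
    intro i j hij hpos
    rw [pow_succ', Matrix.mul_apply] at hpos
    have hex : ∃ m : Fin n, 0 < A i m * (A ^ k) m j := by
      by_contra hc
      push_neg at hc
      have : ∑ m, A i m * (A ^ k) m j ≤ 0 :=
        Finset.sum_nonpos fun m _ => hc m
      linarith
    obtain ⟨m, hm⟩ := hex
    have h1 : 0 < A i m := by
      rcases mul_pos_iff.mp hm with ⟨h1, _⟩ | ⟨h1, _⟩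
      · exact h1
      · exact absurd (hA i m) (not_le.mpr h1)
    have h2 : 0 < (A ^ k) m j := by
      rcases mul_pos_iff.mp hm with ⟨_, h2⟩ | ⟨_, h2⟩
      · exact h2
      · exact absurd (hA i m) (not_le.mpr (by
          rcases mul_pos_iff.mp hm with ⟨ha, _⟩ | ⟨ha, _⟩
          · exact absurd h2 (not_lt.mpr (aux_pow_nonneg A hA k m j))
          · exact ha))
    by_cases him : m = i
    · subst him
      exact ih m j hij h2
    · have hDim : 0 < D i m := hAD i m (fun h => him h.symm) h1
      by_cases hmj : m = j
      · subst hmj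
        refine ⟨1, le_refl 1, fun s => if s = 0 then i else m, by simp, by simp, ?_⟩
        intro s hs
        interval_cases s
        simpa [hij] using hDim
      · obtain ⟨k', hk', l, hl0, hlk, hstep⟩ := ih m j hmj h2
        refine ⟨k' + 1, by omega, fun s => if s = 0 then i else l (s - 1), by simp, ?_, ?_⟩
        · simp [hlk]
        · intro s hs
          match s with
          | 0 =>
            simp only [if_pos rfl, if_neg (Nat.one_ne_zero)]
            simp only [Nat.sub_self]
            rw [hl0]
            exact ⟨fun h => him h.symm, hDim⟩
          | s + 1 =>
            simp only [if_neg (Nat.succ_ne_zero s), if_neg (Nat.succ_ne_zero (s+1)),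
              Nat.add_sub_cancel]
            exact hstep s (by omega)

end Aux

/-- **Irreducibility and positivity of the dispersal semigroup.**
Let `D` be an `n × n` real matrix with nonnegative off-diagonal entries.
Then `D` is irreducible (for every pair of indices `i ≠ j` there is a chain
`i = l 0, l 1, …, l k = j` with `k ≥ 1`, consecutive indices distinct, and
`D (l m) (l (m+1)) > 0` for each `m < k`) if and only if for every `t > 0`
all entries of the matrix exponential `exp (t • D)` are strictly positive. -/
theorem dispersal_irreducible_iff_exp_pos {n : ℕ} (D : Matrix (Fin n) (Fin n) ℝ)
    (hoff : ∀ i j : Fin n, i ≠ j → 0 ≤ D i j) :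
    (∀ i j : Fin n, i ≠ j →
      ∃ k : ℕ, 1 ≤ k ∧ ∃ l : ℕ → Fin n, l 0 = i ∧ l k = j ∧
        ∀ m : ℕ, m < k → l m ≠ l (m + 1) ∧ 0 < D (l m) (l (m + 1)))
    ↔ (∀ t : ℝ, 0 < t → ∀ i j : Fin n, 0 < NormedSpace.exp (t • D) i j) := by
  classical
  set c : ℝ := ∑ i, |D i i| with hc
  have hc0 : 0 ≤ c := Finset.sum_nonneg fun i _ => abs_nonneg _
  set A : Matrix (Fin n) (Fin n) ℝ := D + c • (1 : Matrix (Fin n) (Fin n) ℝ) with hAdef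
  have hA : ∀ i j, 0 ≤ A i j := by
    intro i j
    by_cases h : i = j
    · subst h
      have h1 : |D i i| ≤ c :=
        Finset.single_le_sum (f := fun a => |D a a|) (fun a _ => abs_nonneg _)
          (Finset.mem_univ i)
      have := neg_abs_le (D i i)
      simp only [hAdef, Matrix.add_apply, Matrix.smul_apply, Matrix.one_apply_eq,
        smul_eq_mul, mul_one]
      linarith
    · simp only [hAdef, Matrix.add_apply, Matrix.smul_apply, Matrix.one_apply_ne h,
        smul_eq_mul, mul_zero, add_zero]
      exact hoff i j h
  have hAD : ∀ i j : Fin n, i ≠ j → A i j = D i j := by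
    intro i j h
    simp [hAdef, Matrix.one_apply_ne h]
  -- entrywise relation between exp (t • D) and exp (t • A)
  have key : ∀ t : ℝ, ∀ i j : Fin n,
      exp (t • D) i j = exp (t • A) i j * Real.exp (-(t * c)) := by
    intro t i j
    have hsplit : t • D = t • A + (-(t * c)) • (1 : Matrix (Fin n) (Fin n) ℝ) := by
      rw [hAdef]; module
    have hcomm : Commute (t • A) ((-(t * c)) • (1 : Matrix (Fin n) (Fin n) ℝ)) :=
      (Commute.one_right (t • A)).smul_right _
    have hexp1 : exp ((-(t * c)) • (1 : Matrix (Fin n) (Fin n) ℝ)) =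
        Matrix.diagonal (fun _ : Fin n => Real.exp (-(t * c))) := by
      have hfun : (exp fun _ : Fin n => -(t * c)) = fun _ : Fin n => Real.exp (-(t * c)) := by
        funext a
        rw [Pi.coe_exp, ← Real.exp_eq_exp_ℝ]
      rw [Matrix.smul_one_eq_diagonal, Matrix.exp_diagonal, hfun]
    rw [hsplit, Matrix.exp_add_of_commute _ _ hcomm, hexp1, Matrix.mul_diagonal]
  have htA : ∀ t : ℝ, 0 < t → ∀ i j, 0 ≤ (t • A) i j := by
    intro t ht i j
    simpa [Matrix.smul_apply, smul_eq_mul] using mul_nonneg ht.le (hA i j)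
  constructor
  · -- irreducible → positivity
    intro hirr t ht i j
    rw [key]
    refine mul_pos ?_ (Real.exp_pos _)
    rw [aux_exp_apply (t • A) (htA t ht)]
    by_cases hij : i = j
    · subst hij
      refine Summable.tsum_pos (aux_summable _ (htA t ht) i i)
        (fun k => mul_nonneg (by positivity) (aux_pow_nonneg _ (htA t ht) k i i)) 0 ?_
      simp [Matrix.one_apply_eq]
    · obtain ⟨k, hk1, l, hl0, hlk, hstep⟩ := hirr i j hij
      have hpos : 0 < ((t • A) ^ k) i j := by
        have := aux_pow_pos (t • A) (htA t ht) k l (fun m hm => by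
          have hs := hstep m hm
          have : 0 < A (l m) (l (m + 1)) := by
            rw [hAD _ _ hs.1]; exact hs.2
          simpa [Matrix.smul_apply, smul_eq_mul] using mul_pos ht this)
        rwa [hl0, hlk] at this
      refine Summable.tsum_pos (aux_summable _ (htA t ht) i j)
        (fun k' => mul_nonneg (by positivity) (aux_pow_nonneg _ (htA t ht) k' i j)) k ?_
      positivity
  · -- positivity → irreducible
    intro hpos i j hij
    have h1 : 0 < exp ((1 : ℝ) • D) i j := hpos 1 one_pos i j
    rw [key] at h1
    have h2 : 0 < exp ((1 : ℝ) • A) i j := by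
      by_contra hcon
      push_neg at hcon
      have := Real.exp_pos (-(1 * c))
      nlinarith
    rw [one_smul] at h2
    rw [aux_exp_apply A hA i j] at h2
    have hex : ∃ k : ℕ, 0 < ((k.factorial : ℝ))⁻¹ * (A ^ k) i j := by
      by_contra hc'
      push_neg at hc'
      have hz : ∀ k : ℕ, ((k.factorial : ℝ))⁻¹ * (A ^ k) i j = 0 := fun k =>
        le_antisymm (hc' k) (mul_nonneg (by positivity) (aux_pow_nonneg A hA k i j))
      have hzero : (∑' k : ℕ, ((k.factorial : ℝ))⁻¹ * (A ^ k) i j) = 0 := by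
        rw [tsum_congr hz, tsum_zero]
      linarith
    obtain ⟨k, hk⟩ := hex
    have hk' : 0 < (A ^ k) i j := by
      have hfac : (0:ℝ) < ((k.factorial : ℝ))⁻¹ := by positivity
      nlinarith
    exact aux_chain_of_pow A D hA (fun a b hab h => by rwa [hAD a b hab] at h)
      k i j hij hk'
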